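/- Let δ > 0, let b be continuous and bounded on (-1,-1+δ], let H be continuous on (-1,-1+δ], and let a be continuous on (-1,-1+δ], either everywhere positive or everywhere negative on this interval, with |∫_{x}^{-1+δ} ds/a(s)| → ∞ as x → -1⁺. Suppose g ∈ C¹((-1,-1+δ]) satisfies the Riccati-type equation on (-1,-1+δ). Then sup_{x ∈ (-1,-1+δ]} ( H(x) + (1/2)·b(x)² ) ≥ 0. -/

import Mathlib

open Set Filter Topology MeasureTheory intervalIntegral

private lemma riccati_key (δ c M : ℝ) (hδ : 0 < δ) (hc : c < 0)
    (a b g g' : ℝ → ℝ)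
    (ha : ContinuousOn a (Ioc (-1:ℝ) (-1+δ)))
    (hpos : ∀ x ∈ Ioc (-1:ℝ) (-1+δ), 0 < a x)
    (hM : ∀ x ∈ Ioc (-1:ℝ) (-1+δ), |b x| ≤ M)
    (haInt : Tendsto (fun x => |∫ s in x..(-1+δ), 1 / a s|) (𝓝[>] (-1)) atTop)
    (hg : ∀ x ∈ Ioc (-1:ℝ) (-1+δ), HasDerivWithinAt g (g' x) (Ioc (-1:ℝ) (-1+δ)) x)
    (hg' : ContinuousOn g' (Ioc (-1:ℝ) (-1+δ)))
    (hle : ∀ x ∈ Ioo (-1:ℝ) (-1+δ), a x * g' x ≤ c - (1/2) * (g x + b x)^2) :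
    False := by
  have hy₀ : (-1:ℝ) < -1 + δ := by linarith
  set y₀ : ℝ := -1 + δ with hy₀def
  set I := Ioc (-1:ℝ) y₀ with hIdef
  have hy₀I : y₀ ∈ I := ⟨hy₀, le_rfl⟩
  have hinv : ContinuousOn (fun s => 1 / a s) I :=
    continuousOn_const.div ha (fun x hx => (hpos x hx).ne')
  have hsubI : ∀ x ∈ I, Icc x y₀ ⊆ I := fun x hx t ht =>
    ⟨lt_of_lt_of_le hx.1 ht.1, ht.2⟩
  set F : ℝ → ℝ := fun x => ∫ s in x..y₀, 1 / a s with hFdef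
  have hgat : ∀ t ∈ Ioo (-1:ℝ) y₀, HasDerivAt g (g' t) t := fun t ht =>
    (hg t ⟨ht.1, ht.2.le⟩).hasDerivAt (Ioc_mem_nhds ht.1 ht.2)
  have hgc : ContinuousOn g I := fun x hx => (hg x hx).continuousWithinAt
  -- Step C : g y₀ - g x ≤ c * F x
  have hkey1 : ∀ x ∈ I, g y₀ - g x ≤ c * F x := by
    intro x hx
    have hIcc : Icc x y₀ ⊆ I := hsubI x hx
    have hφint : IntegrableOn (fun s => c * (1 / a s)) (Icc x y₀) :=
      (continuousOn_const.mul (hinv.mono hIcc)).integrableOn_compact isCompact_Icc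
    have h1 := sub_le_integral_of_hasDeriv_right_of_le hx.2 (hgc.mono hIcc)
      (fun t ht => (hgat t ⟨lt_trans hx.1 ht.1, ht.2⟩).hasDerivWithinAt)
      hφint
      (fun t ht => by
        have htI : t ∈ Ioo (-1:ℝ) y₀ := ⟨lt_trans hx.1 ht.1, ht.2⟩
        have hA := hpos t ⟨htI.1, htI.2.le⟩
        have hAD := hle t htI
        rw [mul_one_div, le_div_iff₀ hA]
        nlinarith [sq_nonneg (g t + b t)])
    calc g y₀ - g x ≤ ∫ s in x..y₀, c * (1 / a s) := h1
      _ = c * F x := by rw [intervalIntegral.integral_const_mul]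
  have hF0 : ∀ x ∈ I, 0 ≤ F x := by
    intro x hx
    apply intervalIntegral.integral_nonneg hx.2
    intro u hu
    exact (one_div_pos.2 (hpos u (hsubI x hx hu))).le
  have hImem : I ∈ 𝓝[>] (-1:ℝ) := Ioc_mem_nhdsGT hy₀
  have hImem' : ∀ᶠ x in 𝓝[>] (-1:ℝ), x ∈ I := hImem
  have hFtop : Tendsto F (𝓝[>] (-1:ℝ)) atTop := by
    refine Tendsto.congr' ?_ haInt
    filter_upwards [hImem'] with x hx using abs_of_nonneg (hF0 x hx)
  have hgtop : Tendsto g (𝓝[>] (-1:ℝ)) atTop := by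
    have h1 : Tendsto (fun x => g y₀ + (-c) * F x) (𝓝[>] (-1:ℝ)) atTop :=
      tendsto_atTop_add_const_left _ _ (hFtop.const_mul_atTop (neg_pos.2 hc))
    refine tendsto_atTop_mono' _ ?_ h1
    filter_upwards [hImem'] with x hx
    have h := hkey1 x hx
    show g y₀ + -c * F x ≤ g x
    linarith
  -- find x₁
  have hEv : ∀ᶠ x in 𝓝[>] (-1:ℝ), M + 1 ≤ g x ∧ x ∈ I :=
    (hgtop.eventually_ge_atTop (M+1)).and hImem'
  obtain ⟨x₁, hx₁gt, hx₁sub⟩ := mem_nhdsGT_iff_exists_Ioc_subset.mp hEv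
  have hx₁self := hx₁sub ⟨hx₁gt, le_rfl⟩
  have hx₁I : x₁ ∈ I := hx₁self.2
  set φ : ℝ → ℝ := fun x => (g x - M)⁻¹ with hφdef
  have hgM : ∀ x ∈ Ioc (-1:ℝ) x₁, 1 ≤ g x - M := fun x hx => by
    have := (hx₁sub hx).1; linarith
  have hφpos : ∀ x ∈ Ioc (-1:ℝ) x₁, 0 < φ x := fun x hx =>
    inv_pos.2 (by have := hgM x hx; linarith)
  have hkey2 : ∀ x ∈ Ioc (-1:ℝ) x₁, (1/2) * (F x - F x₁) ≤ φ x₁ - φ x := by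
    intro x hx
    have hxI : x ∈ I := (hx₁sub hx).2
    have hIcc1 : Icc x x₁ ⊆ Ioc (-1:ℝ) x₁ := fun t ht => ⟨lt_of_lt_of_le hx.1 ht.1, ht.2⟩
    have hIccI : Icc x x₁ ⊆ I := fun t ht => (hx₁sub (hIcc1 ht)).2
    have hφc : ContinuousOn φ (Icc x x₁) := by
      apply ContinuousOn.inv₀ ((hgc.mono hIccI).sub continuousOn_const)
      intro t ht
      exact ne_of_gt (by have := hgM t (hIcc1 ht); show (0:ℝ) < g t - M; linarith)
    have hφd : ∀ t ∈ Ioo x x₁, HasDerivWithinAt φ (-(g' t) / (g t - M)^2) (Ioi t) t := by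
      intro t ht
      have htI : t ∈ Ioo (-1:ℝ) y₀ := ⟨lt_trans hx.1 ht.1, lt_of_lt_of_le ht.2 hx₁I.2⟩
      have hne : g t - M ≠ 0 := ne_of_gt (by
        have := hgM t ⟨htI.1, ht.2.le⟩; linarith)
      exact (((hgat t htI).sub_const M).inv hne).hasDerivWithinAt
    have hψint : IntegrableOn (fun t => (1/2) * (1 / a t)) (Icc x x₁) :=
      (continuousOn_const.mul (hinv.mono hIccI)).integrableOn_compact isCompact_Icc
    have hmono : ∀ t ∈ Ioo x x₁, (1/2) * (1 / a t) ≤ -(g' t) / (g t - M)^2 := by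
      intro t ht
      have htI : t ∈ Ioo (-1:ℝ) y₀ := ⟨lt_trans hx.1 ht.1, lt_of_lt_of_le ht.2 hx₁I.2⟩
      have hA := hpos t ⟨htI.1, htI.2.le⟩
      have hG : 1 ≤ g t - M := hgM t ⟨htI.1, ht.2.le⟩
      have hB : g t - M ≤ g t + b t := by
        have h1 := abs_le.mp (hM t ⟨htI.1, htI.2.le⟩); linarith
      have hAD := hle t htI
      rw [show (1/2 : ℝ) * (1 / a t) = 1 / (2 * a t) by ring,
        div_le_div_iff₀ (by positivity) (by positivity)]
      nlinarith [sq_nonneg (g t + b t - (g t - M))]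
    have h2 := integral_le_sub_of_hasDeriv_right_of_le hx.2 hφc hφd hψint hmono
    have int1 : IntervalIntegrable (fun s => 1 / a s) volume x x₁ :=
      (hinv.mono (by rw [uIcc_of_le hx.2]; exact hIccI)).intervalIntegrable
    have int2 : IntervalIntegrable (fun s => 1 / a s) volume x₁ y₀ :=
      (hinv.mono (by rw [uIcc_of_le hx₁I.2]; exact hsubI x₁ hx₁I)).intervalIntegrable
    have hadd : (∫ s in x..x₁, 1 / a s) + (∫ s in x₁..y₀, 1 / a s) = ∫ s in x..y₀, 1 / a s :=
      integral_add_adjacent_intervals int1 int2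
    have h3 : (∫ t in x..x₁, (1/2) * (1 / a t)) = (1/2) * (F x - F x₁) := by
      rw [intervalIntegral.integral_const_mul]
      have : (∫ s in x..x₁, 1 / a s) = F x - F x₁ := by
        simp only [hFdef]; linarith
      rw [this]
    linarith [h2, h3.symm.le, h3.le]
  -- final contradiction
  have hEv2 : ∀ᶠ x in 𝓝[>] (-1:ℝ), F x₁ + 2 * φ x₁ + 1 ≤ F x ∧ x ∈ Ioc (-1:ℝ) x₁ :=
    (hFtop.eventually_ge_atTop _).and (Ioc_mem_nhdsGT hx₁gt)
  obtain ⟨x, hxF, hxmem⟩ := hEv2.exists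
  have h4 := hkey2 x hxmem
  have h5 := hφpos x hxmem
  linarith

/-- If the Riccati-type equation has a C¹ solution on (-1,-1+δ] with
|∫ₓ^{-1+δ} ds/a(s)| → ∞, then sup_{(-1,-1+δ]} (H + b²/2) ≥ 0. -/
theorem stmt14 (δ : ℝ) (hδ : 0 < δ) (a b H g g' : ℝ → ℝ)
    (ha : ContinuousOn a (Ioc (-1 : ℝ) (-1 + δ)))
    (hb : ContinuousOn b (Ioc (-1 : ℝ) (-1 + δ)))
    (hbBdd : ∃ M : ℝ, ∀ x ∈ Ioc (-1 : ℝ) (-1 + δ), |b x| ≤ M)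
    (hH : ContinuousOn H (Ioc (-1 : ℝ) (-1 + δ)))
    (haSign : (∀ x ∈ Ioc (-1 : ℝ) (-1 + δ), 0 < a x) ∨
      (∀ x ∈ Ioc (-1 : ℝ) (-1 + δ), a x < 0))
    (haInt : Tendsto (fun x => |∫ s in x..(-1 + δ), 1 / a s|) (𝓝[>] (-1)) atTop)
    (hg : ∀ x ∈ Ioc (-1 : ℝ) (-1 + δ),
      HasDerivWithinAt g (g' x) (Ioc (-1 : ℝ) (-1 + δ)) x)
    (hg' : ContinuousOn g' (Ioc (-1 : ℝ) (-1 + δ)))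
    (heq : ∀ x ∈ Ioo (-1 : ℝ) (-1 + δ),
      a x * g' x + b x * g x + (1 / 2) * (g x) ^ 2 = H x) :
    ∀ c : ℝ, c < 0 → ∃ x ∈ Ioc (-1 : ℝ) (-1 + δ), c < H x + (1 / 2) * (b x) ^ 2 := by
  intro c hc
  by_contra hcon
  push_neg at hcon
  obtain ⟨M, hM⟩ := hbBdd
  have hle : ∀ x ∈ Ioo (-1:ℝ) (-1+δ), a x * g' x ≤ c - (1/2) * (g x + b x)^2 := by
    intro x hx
    have h1 := heq x hx
    have h2 := hcon x (Ioo_subset_Ioc_self hx)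
    nlinarith [sq_nonneg (g x + b x)]
  rcases haSign with hpos | hneg
  · exact riccati_key δ c M hδ hc a b g g' ha hpos hM haInt hg hg' hle
  · apply riccati_key δ c M hδ hc (fun x => -a x) (fun x => -b x) (fun x => -g x)
      (fun x => -g' x) ha.neg (fun x hx => by simpa using hneg x hx)
      (fun x hx => by simpa using hM x hx) ?_ (fun x hx => (hg x hx).neg) hg'.neg ?_
    · have hfun : ∀ x : ℝ, |∫ s in x..(-1+δ), 1 / (-a s)| = |∫ s in x..(-1+δ), 1 / a s| := by
        intro x
        rw [show (fun s => 1 / -a s) = fun s => -(1 / a s) from funext fun s => by rw [div_neg],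
          intervalIntegral.integral_neg, abs_neg]
      simpa only [hfun] using haInt
    · intro x hx
      have h := hle x hx
      nlinarith [h]
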